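/- Let p ∈ (0,1), q = 1-p, and suppose the barrier satisfies liminf_{n→∞} b_n/n < q/p. Then equality holds: ∑_{n ≥ 0} f(n) · p^{n+1} · q^{b_{n+1}+1} = 1 - q^{b_0+1}. -/

import Mathlib

/-- The number of nondecreasing sequences `0 ≤ a 0 ≤ ⋯ ≤ a n` below the barrier `b`. -/
noncomputable def barrierSeqCount (b : ℕ → ℕ) (n : ℕ) : ℕ :=
  Nat.card {a : Fin (n + 1) → ℕ // Monotone a ∧ ∀ i, a i ≤ b i.1}

open Finset

noncomputable def SS (b : ℕ → ℕ) (N : ℕ) : Finset (Fin (N+1) → ℕ) :=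
  @Finset.filter _ (fun a => Monotone a) (Classical.decPred _)
    (Fintype.piFinset fun i => Finset.range (b i.1 + 1))

lemma mem_SS {b : ℕ → ℕ} {N : ℕ} {a : Fin (N+1) → ℕ} :
    a ∈ SS b N ↔ Monotone a ∧ ∀ i : Fin (N+1), a i ≤ b i.1 := by
  simp [SS, Fintype.mem_piFinset, Nat.lt_succ_iff, and_comm]

lemma fin_one_eq_last (i : Fin (0+1)) : i = Fin.last 0 := by
  apply Fin.ext
  have := i.isLt
  omega

lemma sum_SS_zero (b : ℕ → ℕ) (g : ℕ → ℝ) :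
    ∑ a ∈ SS b 0, g (a (Fin.last 0)) = ∑ k ∈ Finset.range (b 0 + 1), g k := by
  refine Finset.sum_nbij' (fun a => a (Fin.last 0)) (fun k => fun _ => k) ?_ ?_ ?_ ?_ ?_
  · intro a ha
    simp only [Finset.mem_range, Nat.lt_succ_iff]
    exact (mem_SS.1 ha).2 (Fin.last 0)
  · intro k hk
    refine mem_SS.2 ⟨monotone_const, fun i => ?_⟩
    rw [fin_one_eq_last i]
    simpa using Nat.lt_succ_iff.1 (Finset.mem_range.1 hk)
  · intro a _
    funext i
    rw [fin_one_eq_last i]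
  · intro k _; rfl
  · intro a _; rfl


lemma monotone_snoc {n : ℕ} {a : Fin (n+1) → ℕ} {t : ℕ} (ha : Monotone a)
    (ht : a (Fin.last n) ≤ t) : Monotone (Fin.snoc a t : Fin (n+1+1) → ℕ) := by
  rw [Fin.monotone_iff_le_succ]
  intro i
  refine Fin.lastCases ?_ ?_ i
  · rw [Fin.succ_last, Fin.snoc_castSucc, Fin.snoc_last]
    exact ht
  · intro j
    rw [Fin.succ_castSucc, Fin.snoc_castSucc, Fin.snoc_castSucc]
    exact ha Fin.castSucc_lt_succ.le

lemma sum_SS_succ (b : ℕ → ℕ) (hb : Monotone b) (N : ℕ) (g : ℕ → ℝ) :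
    ∑ a ∈ SS b (N+1), g (a (Fin.last (N+1))) =
      ∑ a ∈ SS b N, ∑ t ∈ Finset.Icc (a (Fin.last N)) (b (N+1)), g t := by
  rw [← Finset.sum_sigma (SS b N) (fun a => Finset.Icc (a (Fin.last N)) (b (N+1)))
    (fun x => g x.2)]
  refine Finset.sum_nbij' (i := fun (a : Fin (N+1+1) → ℕ) => (⟨fun i => a i.castSucc, a (Fin.last (N+1))⟩ :
      Σ _ : Fin (N+1) → ℕ, ℕ)) (j := fun (x : Σ _ : Fin (N+1) → ℕ, ℕ) => (Fin.snoc x.1 x.2 : Fin (N+1+1) → ℕ)) ?_ ?_ ?_ ?_ ?_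
  · -- forward: a ∈ SS b (N+1) → pair ∈ sigma
    intro a ha
    obtain ⟨hmono, hle⟩ := mem_SS.1 ha
    refine Finset.mem_sigma.2 ⟨mem_SS.2 ⟨?_, fun i => hle i.castSucc⟩, ?_⟩
    · exact hmono.comp (fun i j hij => Fin.castSucc_le_castSucc_iff.2 hij)
    · refine Finset.mem_Icc.2 ⟨?_, ?_⟩
      · exact hmono (Fin.le_last _)
      · simpa using hle (Fin.last (N+1))
  · -- backward
    intro x hx
    obtain ⟨hx1, hx2⟩ := Finset.mem_sigma.1 hx
    obtain ⟨hmono, hle⟩ := mem_SS.1 hx1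
    obtain ⟨h1, h2⟩ := Finset.mem_Icc.1 hx2
    refine mem_SS.2 ⟨monotone_snoc hmono h1, fun i => ?_⟩
    refine Fin.lastCases ?_ ?_ i
    · simpa using h2
    · intro j
      simp only [Fin.snoc_castSucc, Fin.coe_castSucc]
      exact hle j
  · -- left inverse
    intro a _
    exact Fin.snoc_init_self a
  · -- right inverse
    intro x hx
    ext
    · simp [Fin.init_snoc]
    · simp
  · intro a _
    simp

lemma geom_range_le {x : ℝ} (hx0 : 0 ≤ x) (hx1 : x < 1) (n : ℕ) :
    ∑ i ∈ Finset.range n, x ^ i ≤ 1 / (1 - x) := by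
  have h1 : (0:ℝ) < 1 - x := by linarith
  rw [geom_sum_eq (by intro hc; rw [hc] at hx1; exact lt_irrefl _ hx1 : x ≠ 1)]
  have h2 : (x ^ n - 1) / (x - 1) = (1 - x ^ n) / (1 - x) := by
    rw [div_eq_div_iff (by linarith) (by linarith)]
    ring
  rw [h2]
  exact (div_le_div_iff_of_pos_right h1).2 (by have := pow_nonneg hx0 n; linarith)

lemma geom_Icc_le {x : ℝ} (hx0 : 0 ≤ x) (hx1 : x < 1) (m M : ℕ) :
    ∑ t ∈ Finset.Icc m M, x ^ t ≤ x ^ m * (1 / (1 - x)) := by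
  rcases le_or_gt m (M+1) with h | h
  · rw [← Finset.Ico_add_one_right_eq_Icc, Finset.sum_Ico_eq_sum_range]
    have : ∀ i ∈ Finset.range (M + 1 - m), x ^ (m + i) = x ^ m * x ^ i := by
      intro i _; rw [pow_add]
    rw [Finset.sum_congr rfl this, ← Finset.mul_sum]
    exact mul_le_mul_of_nonneg_left (geom_range_le hx0 hx1 _) (pow_nonneg hx0 m)
  · rw [Finset.Icc_eq_empty (by omega)]
    simp only [Finset.sum_empty]
    have h1 : (0:ℝ) < 1 - x := by linarith
    exact mul_nonneg (pow_nonneg hx0 m) (div_nonneg zero_le_one h1.le)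

lemma geom_Icc_eq {p x : ℝ} (hp : p ≠ 0) (hx : x = 1 - p) {m M : ℕ} (h : m ≤ M + 1) :
    ∑ t ∈ Finset.Icc m M, p * x ^ t = x ^ m - x ^ (M + 1) := by
  have hx1 : x ≠ 1 := by rw [hx]; intro hc; apply hp; linarith
  rw [← Finset.Ico_add_one_right_eq_Icc, ← Finset.mul_sum, Finset.sum_Ico_eq_sub _ h,
    geom_sum_eq hx1, geom_sum_eq hx1]
  have hx1' : x - 1 ≠ 0 := sub_ne_zero.2 hx1
  field_simp
  ring_nf
  rw [hx]
  ring

lemma W_le (b : ℕ → ℕ) (hb : Monotone b) {x : ℝ} (hx0 : 0 ≤ x) (hx1 : x < 1) :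
    ∀ N, ∑ a ∈ SS b N, x ^ (a (Fin.last N)) ≤ (1 / (1 - x)) ^ (N + 1) := by
  intro N
  induction N with
  | zero =>
    rw [sum_SS_zero b (fun k => x ^ k), pow_one]
    exact geom_range_le hx0 hx1 _
  | succ N ih =>
    rw [sum_SS_succ b hb N (fun k => x ^ k)]
    calc ∑ a ∈ SS b N, ∑ t ∈ Finset.Icc (a (Fin.last N)) (b (N+1)), x ^ t
        ≤ ∑ a ∈ SS b N, x ^ (a (Fin.last N)) * (1 / (1 - x)) :=
          Finset.sum_le_sum fun a _ => geom_Icc_le hx0 hx1 _ _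
      _ = (∑ a ∈ SS b N, x ^ (a (Fin.last N))) * (1 / (1 - x)) := by
          rw [Finset.sum_mul]
      _ ≤ (1 / (1 - x)) ^ (N + 1) * (1 / (1 - x)) := by
          have h1 : (0:ℝ) < 1 - x := by linarith
          exact mul_le_mul_of_nonneg_right ih (div_nonneg zero_le_one h1.le)
      _ = (1 / (1 - x)) ^ (N + 1 + 1) := by ring

lemma count_eq (b : ℕ → ℕ) (n : ℕ) : barrierSeqCount b n = (SS b n).card := by
  rw [barrierSeqCount, ← Nat.card_eq_finsetCard]
  exact Nat.card_congr (Equiv.subtypeEquivRight (fun a => mem_SS.symm))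

lemma R_step (b : ℕ → ℕ) (hb : Monotone b) {p q : ℝ} (hq : q = 1 - p) (hp0 : p ≠ 0) (N : ℕ) :
    p ^ (N+1) * ∑ a ∈ SS b N, q ^ (a (Fin.last N)) =
      p ^ (N+1+1) * (∑ a ∈ SS b (N+1), q ^ (a (Fin.last (N+1))))
        + (SS b N).card * p ^ (N+1) * q ^ (b (N+1) + 1) := by
  rw [sum_SS_succ b hb N (fun k => q ^ k)]
  have key : ∀ a ∈ SS b N, ∑ t ∈ Finset.Icc (a (Fin.last N)) (b (N+1)), p * q ^ t
      = q ^ (a (Fin.last N)) - q ^ (b (N+1) + 1) := by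
    intro a ha
    apply geom_Icc_eq hp0 hq
    have h1 := (mem_SS.1 ha).2 (Fin.last N)
    have hbN : b N ≤ b (N+1) := hb (Nat.le_succ N)
    simp only [Fin.val_last] at h1
    omega
  have h2 : p * (∑ a ∈ SS b N, ∑ t ∈ Finset.Icc (a (Fin.last N)) (b (N+1)), q ^ t)
      = (∑ a ∈ SS b N, q ^ (a (Fin.last N))) - (SS b N).card * q ^ (b (N+1)+1) := by
    have h2a : p * (∑ a ∈ SS b N, ∑ t ∈ Finset.Icc (a (Fin.last N)) (b (N+1)), q ^ t)
        = ∑ a ∈ SS b N, ∑ t ∈ Finset.Icc (a (Fin.last N)) (b (N+1)), p * q ^ t := by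
      rw [Finset.mul_sum]
      exact Finset.sum_congr rfl (fun a _ => Finset.mul_sum _ _ _)
    rw [h2a, Finset.sum_congr rfl key, Finset.sum_sub_distrib, Finset.sum_const, nsmul_eq_mul]
  have h3 : p ^ (N+1+1) * (∑ a ∈ SS b N, ∑ t ∈ Finset.Icc (a (Fin.last N)) (b (N+1)), q ^ t)
      = p ^ (N+1) * (p * (∑ a ∈ SS b N, ∑ t ∈ Finset.Icc (a (Fin.last N)) (b (N+1)), q ^ t)) := by
    ring
  rw [h3, h2]
  ring

lemma exists_t {p q c : ℝ} (hp : 0 < p) (hp1 : p < 1) (hq : q = 1 - p) (hc : c < q / p) :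
    ∃ t : ℝ, 0 < t ∧ t < 1 ∧ p < (1 - q * t) * t ^ c := by
  have hq0 : 0 < q := by rw [hq]; linarith
  set φ : ℝ → ℝ := fun t => (1 - q * t) * t ^ c with hφ
  have h1 : HasDerivAt (fun t : ℝ => 1 - q * t) (-q) 1 := by
    simpa using ((hasDerivAt_id (1:ℝ)).const_mul q).const_sub 1
  have h2 : HasDerivAt (fun t : ℝ => t ^ c) (c * (1:ℝ) ^ (c - 1)) 1 :=
    Real.hasDerivAt_rpow_const (Or.inl one_ne_zero)
  have hd := h1.mul h2
  have hval : (-q) * (1:ℝ) ^ c + (1 - q * 1) * (c * (1:ℝ) ^ (c - 1)) < 0 := by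
    rw [Real.one_rpow, Real.one_rpow]
    have hpc : c * p < q := (lt_div_iff₀ hp).1 hc
    have hq' : 1 - q = p := by rw [hq]; ring
    nlinarith
  have hslope := hasDerivAt_iff_tendsto_slope.1 hd
  have hev : ∀ᶠ t in nhdsWithin (1:ℝ) {(1:ℝ)}ᶜ, slope φ 1 t < 0 :=
    hslope.eventually_lt_const hval
  have hmono : nhdsWithin (1:ℝ) (Set.Iio 1) ≤ nhdsWithin (1:ℝ) {(1:ℝ)}ᶜ :=
    nhdsWithin_mono 1 (fun x hx => ne_of_lt hx)
  have hev2 : ∀ᶠ t in nhdsWithin (1:ℝ) (Set.Iio 1), slope φ 1 t < 0 := hmono hev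
  have hio : Set.Ioo (0:ℝ) 1 ∈ nhdsWithin (1:ℝ) (Set.Iio 1) :=
    Ioo_mem_nhdsLT_of_mem (by norm_num)
  obtain ⟨t, ht1, ht2⟩ := (hev2.and (Filter.eventually_of_mem hio (fun x hx => hx))).exists
  obtain ⟨ht0, htlt⟩ := ht2
  rw [slope_def_field] at ht1
  have hφ1 : φ 1 = p := by simp [hφ, Real.one_rpow, hq]
  have hpos : φ 1 < φ t := by
    by_contra hcon
    push_neg at hcon
    have hnn := div_nonneg_of_nonpos (by linarith : φ t - φ 1 ≤ 0)
      (by linarith : t - 1 ≤ 0)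
    linarith
  exact ⟨t, ht0, htlt, by rw [hφ1] at hpos; exact hpos⟩

open Filter in
theorem stmt_13 (b : ℕ → ℕ) (hb : Monotone b) (p : ℝ) (hp : p ∈ Set.Ioo (0 : ℝ) 1)
    (q : ℝ) (hq : q = 1 - p)
    (hθ : Filter.liminf (fun n : ℕ => (((b n : ℝ) / n : ℝ) : EReal)) Filter.atTop <
      ((q / p : ℝ) : EReal)) :
    ∑' n : ℕ, (barrierSeqCount b n : ℝ) * p ^ (n + 1) * q ^ (b (n + 1) + 1) =
      1 - q ^ (b 0 + 1) := by
  obtain ⟨hp0, hp1⟩ := hp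
  have hq0 : 0 < q := by rw [hq]; linarith
  have hq1 : q < 1 := by rw [hq]; linarith
  set R : ℕ → ℝ := fun N => p ^ (N+1) * ∑ a ∈ SS b N, q ^ (a (Fin.last N)) with hR
  have hterm : ∀ n : ℕ, (barrierSeqCount b n : ℝ) * p ^ (n+1) * q ^ (b (n+1) + 1)
      = R n - R (n+1) := by
    intro n
    have h := R_step b hb hq (ne_of_gt hp0) n
    rw [count_eq]
    simp only [hR]
    linarith
  have hterm_nn : ∀ n : ℕ, 0 ≤ (barrierSeqCount b n : ℝ) * p ^ (n+1) * q ^ (b (n+1) + 1) := by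
    intro n; positivity
  have hWnn : ∀ N, 0 ≤ ∑ a ∈ SS b N, q ^ (a (Fin.last N)) :=
    fun N => Finset.sum_nonneg fun a _ => pow_nonneg hq0.le _
  have hRnn : ∀ N, 0 ≤ R N := fun N => mul_nonneg (pow_nonneg hp0.le _) (hWnn N)
  have hanti : Antitone R := antitone_nat_of_succ_le (fun n => by
    have h1 := hterm n; have h2 := hterm_nn n; linarith)
  have hR0 : R 0 = 1 - q ^ (b 0 + 1) := by
    simp only [hR]
    rw [sum_SS_zero b (fun k => q ^ k), pow_one, Finset.mul_sum,
      ← Nat.Ico_zero_eq_range, Finset.Ico_add_one_right_eq_Icc,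
      geom_Icc_eq (ne_of_gt hp0) hq (Nat.zero_le _), pow_zero]
  -- extract a real constant from the liminf hypothesis
  obtain ⟨c, hc1, hc2⟩ := exists_between hθ
  have hfreq := Filter.frequently_lt_of_liminf_lt (by isBoundedDefault) hc1
  obtain ⟨n₀, hn₀⟩ := hfreq.exists
  have hcbot : c ≠ ⊥ := by
    intro hcb; rw [hcb] at hn₀; exact lt_asymm (EReal.bot_lt_coe _) hn₀
  have hctop : c ≠ ⊤ := ne_top_of_lt hc2
  lift c to ℝ using ⟨hctop, hcbot⟩
  rw [EReal.coe_lt_coe_iff] at hc2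
  have hfreqR : ∃ᶠ n in atTop, ((b n : ℝ) / n) < c :=
    hfreq.mono (fun n hn => EReal.coe_lt_coe_iff.1 hn)
  obtain ⟨t, ht0, ht1, htφ⟩ := exists_t hp0 hp1 hq hc2
  set x := q * t with hx
  have hx0 : 0 < x := mul_pos hq0 ht0
  have hx1 : x < 1 := by nlinarith
  have h1x : 0 < 1 - x := by linarith
  set K := p / (1 - x) with hK
  have hK0 : 0 < K := div_pos hp0 h1x
  have htc : 0 < t ^ c := Real.rpow_pos_of_pos ht0 c
  set u := (t ^ c)⁻¹ with hu
  have hu0 : 0 < u := inv_pos.2 htc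
  have h1t : (1:ℝ) ≤ 1/t := (le_div_iff₀ ht0).2 (by linarith)
  have hbound : ∀ n : ℕ, (b n : ℝ) ≤ c * n → R n ≤ K * (K * u) ^ n := by
    intro n hbn
    have hstep1 : ∑ a ∈ SS b n, q ^ (a (Fin.last n))
        ≤ (1/t) ^ (b n) * ∑ a ∈ SS b n, x ^ (a (Fin.last n)) := by
      rw [Finset.mul_sum]
      apply Finset.sum_le_sum
      intro a ha
      have hk : a (Fin.last n) ≤ b n := by
        have := (mem_SS.1 ha).2 (Fin.last n); simpa using this
      have hqx : q = x * (1/t) := by rw [hx]; field_simp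
      rw [hqx, mul_pow]
      calc x ^ (a (Fin.last n)) * (1/t) ^ (a (Fin.last n))
          ≤ x ^ (a (Fin.last n)) * (1/t) ^ (b n) :=
            mul_le_mul_of_nonneg_left (pow_le_pow_right₀ h1t hk) (pow_nonneg hx0.le _)
        _ = (1/t) ^ (b n) * x ^ (a (Fin.last n)) := mul_comm _ _
    have hstep2 := W_le b hb hx0.le hx1 n
    have h3 : R n ≤ K ^ (n+1) * (1/t) ^ (b n) := by
      have h31 : R n ≤ p ^ (n+1) * ((1/t) ^ (b n) * (1/(1-x)) ^ (n+1)) := by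
        refine mul_le_mul_of_nonneg_left (hstep1.trans ?_) (pow_nonneg hp0.le (n+1))
        exact mul_le_mul_of_nonneg_left hstep2 (pow_nonneg (by positivity) _)
      refine h31.trans_eq ?_
      rw [hK, div_eq_mul_one_div, mul_pow]
      ring
    have h4 : ((1/t : ℝ)) ^ (b n) ≤ u ^ n := by
      have e1 : ((1/t:ℝ)) ^ (b n) = (1/t) ^ ((b n : ℝ)) := (Real.rpow_natCast _ _).symm
      have h5 : (1/t:ℝ) ^ ((b n : ℝ)) ≤ (1/t) ^ (c * n) :=
        Real.rpow_le_rpow_of_exponent_le h1t hbn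
      have h6 : (1/t:ℝ) ^ (c * (n:ℝ)) = ((1/t) ^ c) ^ (n:ℕ) := by
        rw [Real.rpow_mul (by positivity), Real.rpow_natCast]
      have h7 : ((1/t:ℝ)) ^ c = u := by rw [one_div, Real.inv_rpow ht0.le, hu]
      rw [e1]
      calc (1/t:ℝ) ^ ((b n : ℝ)) ≤ (1/t) ^ (c * (n:ℝ)) := h5
        _ = ((1/t) ^ c) ^ (n:ℕ) := h6
        _ = u ^ n := by rw [h7]
    calc R n ≤ K ^ (n+1) * (1/t) ^ (b n) := h3
      _ ≤ K ^ (n+1) * u ^ n := mul_le_mul_of_nonneg_left h4 (pow_nonneg hK0.le _)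
      _ = K * (K * u) ^ n := by rw [mul_pow, pow_succ]; ring
  have hρ : K * u < 1 := by
    rw [hK, hu, div_mul_eq_mul_div, div_lt_one h1x, ← div_eq_mul_inv, div_lt_iff₀ htc]
    rw [hx] at *
    exact lt_of_lt_of_le htφ (le_of_eq rfl)
  have hρ0 : 0 ≤ K * u := mul_nonneg hK0.le hu0.le
  have hRto : Tendsto R atTop (nhds 0) := by
    rw [Metric.tendsto_atTop]
    intro ε hε
    have hgeo : Tendsto (fun n : ℕ => K * (K*u)^n) atTop (nhds 0) := by
      have h := tendsto_pow_atTop_nhds_zero_of_lt_one hρ0 hρ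
      simpa using h.const_mul K
    have hev : ∀ᶠ n : ℕ in atTop, K * (K*u)^n < ε := hgeo.eventually_lt_const hε
    obtain ⟨n, hn1, hn2, hn3⟩ := (hfreqR.and_eventually (hev.and (eventually_ge_atTop 1))).exists
    refine ⟨n, fun m hm => ?_⟩
    rw [Real.dist_0_eq_abs, abs_of_nonneg (hRnn m)]
    have hnpos : (0:ℝ) < n := by exact_mod_cast hn3
    have hbn : (b n : ℝ) ≤ c * n := le_of_lt ((div_lt_iff₀ hnpos).1 hn1)
    calc R m ≤ R n := hanti hm
      _ ≤ K * (K*u)^n := hbound n hbn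
      _ < ε := hn2
  have hps : ∀ N, ∑ n ∈ Finset.range N,
      ((barrierSeqCount b n : ℝ) * p ^ (n+1) * q ^ (b (n+1) + 1)) = R 0 - R N := by
    intro N
    rw [Finset.sum_congr rfl (fun n _ => hterm n), Finset.sum_range_sub']
  have hlim : Tendsto (fun N => ∑ n ∈ Finset.range N,
      ((barrierSeqCount b n : ℝ) * p ^ (n+1) * q ^ (b (n+1) + 1))) atTop
      (nhds (1 - q ^ (b 0 + 1))) := by
    simp only [hps]
    have h : Tendsto (fun N : ℕ => R 0 - R N) atTop (nhds (R 0 - 0)) :=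
      Tendsto.sub tendsto_const_nhds hRto
    rw [sub_zero, hR0] at h
    exact h.congr (fun N => by rw [hR0])
  exact ((hasSum_iff_tendsto_nat_of_nonneg hterm_nn _).2 hlim).tsum_eq
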